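/- If (S, N) is a quadratic normalisation of class (4, 3), then for every p ≥ 1 and every length-p word w over S, one has N(w) = N̄_{δ_p}(w). -/

import Mathlib

namespace QN

variable {S A : Type*}

/-- A normalisation: a length-preserving map `N` on words over `S` fixing
length-one words and satisfying `N (u ++ N w ++ v) = N (u ++ w ++ v)`. -/
structure Normalisation (S : Type*) where
  N : List S → List S
  length_eq : ∀ w : List S, (N w).length = w.length
  single : ∀ s : S, N [s] = [s]
  mid : ∀ u v w : List S, N (u ++ N w ++ v) = N (u ++ w ++ v)

/-- Extract the two entries of a length-two word (with a default fallback). -/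
def pairOf : List S → S → S → S × S
  | [x, y], _, _ => (x, y)
  | _, s, t => (s, t)

/-- The restriction `N̄` of `N` to length-two words, as a map on pairs. -/
def nbar (N : List S → List S) (s t : S) : S × S :=
  pairOf (N [s, t]) s t

/-- Apply `f` to the length-two factor at (1-indexed) position `i`;
out-of-range positions act as the identity. -/
def applyAt (f : S → S → S × S) : ℕ → List S → List S
  | 1, a :: b :: l => (f a b).1 :: (f a b).2 :: l
  | n + 2, a :: l => a :: applyAt f (n + 1) l
  | _, l => l

/-- `φ_u`: apply `φ` at the successive positions of `u`, leftmost entry of `u` first. -/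
def applySeq (f : S → S → S × S) (u : List ℕ) (w : List S) : List S :=
  u.foldl (fun w i => applyAt f i w) w

/-- A word is `N`-normal iff all its length-two factors are `N`-normal. -/
def LocallyNormal (N : List S → List S) : Prop :=
  ∀ w : List S, N w = w ↔ ∀ u v : List S, ∀ s t : S, w = u ++ s :: t :: v → N [s, t] = [s, t]

/-- Every word is normalised by finitely many applications of `N̄` at positions. -/
def NbarGenerated (N : List S → List S) : Prop :=
  ∀ w : List S, ∃ u : List ℕ, N w = applySeq (nbar N) u w

/-- A normalisation map is quadratic if it satisfies the two locality conditions. -/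
def Quadratic (N : List S → List S) : Prop :=
  LocallyNormal N ∧ NbarGenerated N

/-- `e` is `N`-neutral: `N (w·e) = N (e·w) = N w · e`. -/
def Neutral (N : List S → List S) (e : S) : Prop :=
  ∀ w : List S, N (w ++ [e]) = N w ++ [e] ∧ N (e :: w) = N w ++ [e]

/-- The alternating sequence of length `m` starting with `k ∈ {1,2}`. -/
def altFrom : ℕ → ℕ → List ℕ
  | _, 0 => []
  | k, n + 1 => k :: altFrom (3 - k) n

/-- `(S, N)` is of left-class `c`: `N = N̄_{α_c}` on length-three words. -/
def LeftClass (N : List S → List S) (c : ℕ) : Prop :=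
  ∀ w : List S, w.length = 3 → N w = applySeq (nbar N) (altFrom 1 c) w

/-- `(S, N)` is of right-class `c`: `N = N̄_{ᾱ_c}` on length-three words. -/
def RightClass (N : List S → List S) (c : ℕ) : Prop :=
  ∀ w : List S, w.length = 3 → N w = applySeq (nbar N) (altFrom 2 c) w

/-- The domino rule is valid for `f`. -/
def DominoRule (f : S → S → S × S) : Prop :=
  ∀ s₁ s₂ s₁' s₂' t₀ t₁ t₂ : S,
    f t₀ s₁ = (s₁', t₁) → f t₁ s₂ = (s₂', t₂) →
    f s₁ s₂ = (s₁, s₂) → f s₁' s₂' = (s₁', s₂')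

/-- The sequences `δ_p`: `δ₁ = ε` and `δ_p = sh(δ_{p-1})·1·2·⋯·(p-1)`. -/
def delta : ℕ → List ℕ
  | 0 => []
  | 1 => []
  | p + 2 => (delta (p + 1)).map (· + 1) ++ List.range' 1 (p + 1)

/-- Apply `N` to the length-`k` factor beginning at (1-indexed) position `i`. -/
def applyFactorAt (N : List S → List S) (k : ℕ) : ℕ → List S → List S
  | 0, w => w
  | i + 1, w => w.take i ++ N ((w.drop i).take k) ++ w.drop (i + k)

/-- Apply `N` to length-`k` factors at the successive positions of `u`. -/
def applyFactorSeq (N : List S → List S) (k : ℕ) (u : List ℕ) (w : List S) : List S :=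
  u.foldl (fun w i => applyFactorAt N k i w) w

/-- One-step rewriting relation of a rewriting system `R`. -/
def RStep (R : List A → List A → Prop) (x y : List A) : Prop :=
  ∃ u v w w', R w w' ∧ x = u ++ w ++ v ∧ y = u ++ w' ++ v

/-- A rewriting system is terminating if it admits no infinite rewriting sequence. -/
def Terminating (R : List A → List A → Prop) : Prop :=
  ¬ ∃ f : ℕ → List A, ∀ n, RStep R (f n) (f (n + 1))

/-- Confluence of a rewriting system. -/
def Confluent (R : List A → List A → Prop) : Prop :=
  ∀ w w₁ w₂ : List A, Relation.ReflTransGen (RStep R) w w₁ →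
    Relation.ReflTransGen (RStep R) w w₂ →
    ∃ w', Relation.ReflTransGen (RStep R) w₁ w' ∧ Relation.ReflTransGen (RStep R) w₂ w'

/-- A word is `R`-normal if no rule of `R` applies to any of its factors. -/
def RNormal (R : List A → List A → Prop) (w : List A) : Prop :=
  ¬ ∃ w', RStep R w w'

/-- Every word rewrites to some `R`-normal word. -/
def Normalising (R : List A → List A → Prop) : Prop :=
  ∀ w : List A, ∃ w', Relation.ReflTransGen (RStep R) w w' ∧ RNormal R w'

/-- A rewriting system is quadratic if all its rules relate length-two words. -/
def QuadraticRS (R : List A → List A → Prop) : Prop :=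
  ∀ w w', R w w' → w.length = 2 ∧ w'.length = 2

/-- A rewriting system is reduced. -/
def ReducedRS (R : List A → List A → Prop) : Prop :=
  ∀ w w', R w w' → RNormal R w' ∧ RNormal (fun a b => R a b ∧ ¬(a = w ∧ b = w')) w

/-- The rewriting system associated with a quadratic normalisation:
one rule `s·t → N̄(s·t)` for each non-`N`-normal length-two word. -/
def rules (N : List S → List S) : List S → List S → Prop :=
  fun w w' => ∃ s t : S, w = [s, t] ∧ w' = N [s, t] ∧ w' ≠ w

/-- `π_e`: delete all occurrences of `e`, landing in words over `S∖{e}`. -/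
noncomputable def pie (e : S) (w : List S) : List {s : S // s ≠ e} :=
  w.filterMap fun s => @dite _ (s = e) (Classical.dec _) (fun _ => none) (fun h => some ⟨s, h⟩)

/-- The rewriting system `R_e` over `S∖{e}`. -/
def rulesE (N : List S → List S) (e : S) :
    List {s : S // s ≠ e} → List {s : S // s ≠ e} → Prop :=
  fun w w' => ∃ s t : {s : S // s ≠ e},
    w = [s, t] ∧ N [s.1, t.1] ≠ [s.1, t.1] ∧ w' = pie e (N [s.1, t.1])

/-- `M` admits the monoid presentation `⟨S ∣ r⟩`. -/
def PresentedBy (M : Type*) [Monoid M] (S : Type*) (r : List S → List S → Prop) : Prop :=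
  Nonempty ((conGen fun a b : FreeMonoid S => r a.toList b.toList).Quotient ≃* M)

/-- Left-divisibility in a monoid. -/
def LeftDvd {M : Type*} [Monoid M] (f g : M) : Prop :=
  ∃ g', f * g' = g

/-- The pair `s₁, s₂` is `S`-normal (greedy). -/
def SNormalPair {M : Type*} [Monoid M] (S : Set M) (s₁ s₂ : M) : Prop :=
  ∀ s ∈ S, ∀ f : M, LeftDvd s (f * s₁ * s₂) → LeftDvd s (f * s₁)

/-- A word over `S` is `S`-normal if all its adjacent pairs are. -/
def SNormalWord {M : Type*} [Monoid M] (S : Set M) (w : List S) : Prop :=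
  ∀ u v : List S, ∀ a b : S, w = u ++ a :: b :: v → SNormalPair S (a : M) (b : M)

end QN

namespace Aux
open QN

variable {S : Type*}

lemma pair_eq (ns : Normalisation S) (s t : S) :
    ns.N [s, t] = [(nbar ns.N s t).1, (nbar ns.N s t).2] := by
  have h := ns.length_eq [s, t]
  rcases hw : ns.N [s, t] with _ | ⟨a, _ | ⟨b, _ | ⟨c, l⟩⟩⟩ <;> rw [hw] at h <;> simp at h
  simp [nbar, hw, pairOf]

lemma idemN (ns : Normalisation S) (w : List S) : ns.N (ns.N w) = ns.N w := by
  have := ns.mid [] [] w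
  simpa using this

lemma pair_image (ns : Normalisation S) (s t : S) :
    ns.N [(nbar ns.N s t).1, (nbar ns.N s t).2] = [(nbar ns.N s t).1, (nbar ns.N s t).2] := by
  rw [← pair_eq]
  exact idemN ns [s, t]

lemma N_applyAt (ns : Normalisation S) : ∀ (i : ℕ) (w : List S),
    ns.N (applyAt (nbar ns.N) i w) = ns.N w := by
  intro i
  induction i with
  | zero => intro w; rfl
  | succ n ih =>
    intro w
    match n, w with
    | 0, [] => rfl
    | 0, [a] => rfl
    | 0, a :: b :: l =>
      show ns.N ((nbar ns.N a b).1 :: (nbar ns.N a b).2 :: l) = ns.N (a :: b :: l)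
      have h := ns.mid [] l [a, b]
      rw [pair_eq ns a b] at h
      simpa using h
    | m + 1, [] => rfl
    | m + 1, a :: l =>
      show ns.N (a :: applyAt (nbar ns.N) (m + 1) l) = ns.N (a :: l)
      have h1 := ns.mid [a] [] (applyAt (nbar ns.N) (m + 1) l)
      have h2 := ns.mid [a] [] l
      simp only [List.cons_append, List.nil_append, List.append_nil] at h1 h2
      rw [← h1, ih l, h2]

lemma N_applySeq (ns : Normalisation S) (u : List ℕ) : ∀ w : List S,
    ns.N (applySeq (nbar ns.N) u w) = ns.N w := by
  induction u with
  | nil => intro w; rfl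
  | cons i u ih =>
    intro w
    show ns.N (applySeq (nbar ns.N) u (applyAt (nbar ns.N) i w)) = ns.N w
    rw [ih, N_applyAt]

lemma applyAt_succ (f : S → S → S × S) (i : ℕ) (hi : 1 ≤ i) (a : S) (l : List S) :
    applyAt f (i + 1) (a :: l) = a :: applyAt f i l := by
  match i, hi with
  | m + 1, _ => rfl

lemma applySeq_cons (f : S → S → S × S) (i : ℕ) (u : List ℕ) (w : List S) :
    applySeq f (i :: u) w = applySeq f u (applyAt f i w) := rfl

lemma applySeq_shift (f : S → S → S × S) : ∀ (u : List ℕ), (∀ i ∈ u, 1 ≤ i) →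
    ∀ (a : S) (l : List S),
    applySeq f (u.map (· + 1)) (a :: l) = a :: applySeq f u l := by
  intro u
  induction u with
  | nil => intro _ a l; rfl
  | cons i u ih =>
    intro hu a l
    simp only [List.map_cons]
    rw [applySeq_cons, applyAt_succ f i (hu i List.mem_cons_self),
      ih (fun j hj => hu j (List.mem_cons_of_mem _ hj)), applySeq_cons]

lemma range'_shift : ∀ (n s : ℕ), List.range' (s + 1) n = (List.range' s n).map (· + 1) := by
  intro n
  induction n with
  | zero => intro s; rfl
  | succ n ih =>
    intro s
    rw [List.range'_succ, List.range'_succ, ih (s + 1), List.map_cons]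

lemma delta_pos (p : ℕ) : ∀ i ∈ delta p, 1 ≤ i := by
  match p with
  | 0 => simp [delta]
  | 1 => simp [delta]
  | p + 2 =>
    intro i hi
    simp only [delta, List.mem_append, List.mem_map, List.mem_range'] at hi
    rcases hi with ⟨j, _, rfl⟩ | ⟨j, _, rfl⟩ <;> omega

lemma domino (ns : Normalisation S) (h3 : RightClass ns.N 3) (hloc : LocallyNormal ns.N)
    (t₀ s₁ s₂ : S) (hn : ns.N [s₁, s₂] = [s₁, s₂]) :
    ns.N [(nbar ns.N t₀ s₁).1, (nbar ns.N (nbar ns.N t₀ s₁).2 s₂).1]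
      = [(nbar ns.N t₀ s₁).1, (nbar ns.N (nbar ns.N t₀ s₁).2 s₂).1] := by
  have hfix : nbar ns.N s₁ s₂ = (s₁, s₂) := by
    have h := pair_eq ns s₁ s₂
    rw [hn] at h
    simp only [List.cons.injEq, and_true] at h
    exact Prod.ext h.1.symm h.2.symm
  have key := h3 [t₀, s₁, s₂] rfl
  have hcomp : applySeq (nbar ns.N) (altFrom 2 3) [t₀, s₁, s₂]
      = [(nbar ns.N t₀ s₁).1, (nbar ns.N (nbar ns.N t₀ s₁).2 s₂).1,
         (nbar ns.N (nbar ns.N t₀ s₁).2 s₂).2] := by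
    show applySeq (nbar ns.N) [2, 1, 2] [t₀, s₁, s₂] = _
    rw [applySeq_cons]
    have e1 : applyAt (nbar ns.N) 2 [t₀, s₁, s₂] = [t₀, s₁, s₂] := by
      show t₀ :: (nbar ns.N s₁ s₂).1 :: (nbar ns.N s₁ s₂).2 :: [] = _
      rw [hfix]
    rw [e1, applySeq_cons]
    have e2 : applyAt (nbar ns.N) 1 [t₀, s₁, s₂]
        = [(nbar ns.N t₀ s₁).1, (nbar ns.N t₀ s₁).2, s₂] := rfl
    rw [e2, applySeq_cons]
    rfl
  rw [hcomp] at key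
  have hnorm : ns.N [(nbar ns.N t₀ s₁).1, (nbar ns.N (nbar ns.N t₀ s₁).2 s₂).1,
      (nbar ns.N (nbar ns.N t₀ s₁).2 s₂).2] = [(nbar ns.N t₀ s₁).1,
      (nbar ns.N (nbar ns.N t₀ s₁).2 s₂).1, (nbar ns.N (nbar ns.N t₀ s₁).2 s₂).2] := by
    rw [← key]; exact idemN ns [t₀, s₁, s₂]
  exact (hloc _).mp hnorm [] [(nbar ns.N (nbar ns.N t₀ s₁).2 s₂).2] _ _ rfl

lemma main_lemma (ns : Normalisation S) (h3 : RightClass ns.N 3)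
    (hloc : LocallyNormal ns.N) :
    ∀ (v : List S) (t₀ : S),
      (∀ u u' : List S, ∀ a b : S, v = u ++ a :: b :: u' → ns.N [a, b] = [a, b]) →
      ∃ u t, applySeq (nbar ns.N) (List.range' 1 v.length) (t₀ :: v) = u ++ [t] ∧
        (∀ u₁ u₂ : List S, ∀ a b : S, u ++ [t] = u₁ ++ a :: b :: u₂ → ns.N [a, b] = [a, b]) ∧
        (∀ s₁ v', v = s₁ :: v' → ∃ u₂, u = (nbar ns.N t₀ s₁).1 :: u₂) ∧
        u.length = v.length := by
  intro v
  induction v with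
  | nil =>
    intro t₀ _
    refine ⟨[], t₀, rfl, ?_, ?_, rfl⟩
    · intro u₁ u₂ a b h
      have := congrArg List.length h
      simp at this
      omega
    · intro s₁ v' h
      exact absurd h (by simp)
  | cons s₁ v' ih =>
    intro t₀ hv
    have hv' : ∀ u u' : List S, ∀ a b : S, v' = u ++ a :: b :: u' → ns.N [a, b] = [a, b] := by
      intro u u' a b h
      exact hv (s₁ :: u) u' a b (by rw [h]; rfl)
    obtain ⟨u', t', heq, hpairs, hhead, hlen⟩ := ih (nbar ns.N t₀ s₁).2 hv'
    refine ⟨(nbar ns.N t₀ s₁).1 :: u', t', ?_, ?_, ?_, by simp [hlen]⟩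
    · have hr : List.range' 1 (s₁ :: v').length = 1 :: (List.range' 1 v'.length).map (· + 1) := by
        show List.range' 1 (v'.length + 1) = _
        rw [List.range'_succ, range'_shift]
      rw [hr, applySeq_cons]
      have e1 : applyAt (nbar ns.N) 1 (t₀ :: s₁ :: v')
          = (nbar ns.N t₀ s₁).1 :: (nbar ns.N t₀ s₁).2 :: v' := rfl
      rw [e1, applySeq_shift _ _ (fun i hi => by
        simp only [List.mem_range'] at hi; omega), heq]
      rfl
    · intro u₁ u₂ a b h
      match u₁, h with
      | [], h =>
        simp only [List.cons_append, List.nil_append, List.cons.injEq] at h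
        obtain ⟨rfl, h2⟩ := h
        cases v' with
        | nil =>
          have hu0 : u' = [] := List.eq_nil_of_length_eq_zero hlen
          subst hu0
          have ht' : t' = (nbar ns.N t₀ s₁).2 := by
            have h3 := heq
            simp [applySeq] at h3
            exact h3.symm
          simp only [List.nil_append, List.cons.injEq] at h2
          rw [← h2.1, ht']
          exact pair_image ns t₀ s₁
        | cons s₂ v'' =>
          obtain ⟨u₂', rfl⟩ := hhead s₂ v'' rfl
          simp only [List.cons_append, List.cons.injEq] at h2
          rw [← h2.1]
          exact domino ns h3 hloc t₀ s₁ s₂ (hv [] v'' s₁ s₂ rfl)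
      | c :: u₁', h =>
        simp only [List.cons_append, List.cons.injEq] at h
        exact hpairs u₁' u₂ a b h.2
    · intro s v'' h
      injection h with h1 h2
      subst h1
      exact ⟨u', rfl⟩

end Aux
open QN
/-- If `(S, N)` is a quadratic normalisation of class `(4, 3)`, then
`N(w) = N̄_{δ_p}(w)` for every length-`p` word `w` with `p ≥ 1`. -/
theorem statement11 {S : Type*} (ns : Normalisation S) (hq : Quadratic ns.N)
    (h4 : LeftClass ns.N 4) (h3 : RightClass ns.N 3) :
    ∀ p : ℕ, 1 ≤ p → ∀ w : List S, w.length = p →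
      ns.N w = applySeq (nbar ns.N) (delta p) w := by
  intro p
  induction p with
  | zero => intro hp; omega
  | succ q ih =>
    intro hp w hw
    cases q with
    | zero =>
      obtain ⟨s, rfl⟩ : ∃ s, w = [s] := by
        cases w with
        | nil => simp at hw
        | cons a l =>
          cases l with
          | nil => exact ⟨a, rfl⟩
          | cons b l' => simp at hw
      rw [ns.single]; rfl
    | succ q =>
      cases w with
      | nil => simp at hw
      | cons s v =>
        have hvlen : v.length = q + 1 := by simpa using hw
        have hNv := ih (by omega) v hvlen
        have hNvlen : (ns.N v).length = q + 1 := by rw [ns.length_eq, hvlen]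
        have hpairs : ∀ u u' : List S, ∀ a b : S,
            ns.N v = u ++ a :: b :: u' → ns.N [a, b] = [a, b] :=
          (hq.1 (ns.N v)).mp (Aux.idemN ns v)
        obtain ⟨u, t, heq, hup, -, -⟩ := Aux.main_lemma ns h3 hq.1 (ns.N v) s hpairs
        rw [hNvlen] at heq
        have hdelta : delta (q + 1 + 1) = (delta (q + 1)).map (· + 1) ++ List.range' 1 (q + 1) := by
          rfl
        have hsplit : applySeq (nbar ns.N) (delta (q + 1 + 1)) (s :: v)
            = applySeq (nbar ns.N) (List.range' 1 (q + 1))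
                (applySeq (nbar ns.N) ((delta (q + 1)).map (· + 1)) (s :: v)) := by
          rw [hdelta]
          exact List.foldl_append
        rw [hsplit, Aux.applySeq_shift _ _ (Aux.delta_pos (q + 1)) s v, ← hNv, heq]
        have e1 : ns.N (s :: v) = ns.N (s :: ns.N v) := by
          have := ns.mid [s] [] v
          simpa using this.symm
        have e2 : ns.N (s :: ns.N v) = ns.N (u ++ [t]) := by
          rw [← heq, Aux.N_applySeq]
        rw [e1, e2]
        exact (hq.1 (u ++ [t])).mpr hup
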